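/- arXiv:1903.02998 — 3 statements merged into one kernel-verified Lean document; each statement's English description precedes it below -/
import Mathlib

section
/- Let G, H ⊆ binom(ℕ,d) be finite families of d-sets with |G| = |H|. If G is compressed and H is both left-compressed and right-compressed, then |Inc(G)| ≤ |Inc(H)|. -/
def Inc1 : Set (ℕ → ℕ) := {π | StrictMono π ∧ ∀ j, π j ≤ j + 1}

def incF (F : Set (Finset ℕ)) : Set (Finset ℕ) :=
  {v | ∃ u ∈ F, ∃ π ∈ Inc1, v = u.image π}

def compressionIn (A : Set ℕ) (d n : ℕ) : Set (Finset ℕ) :=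
  {v | ↑v ⊆ A ∧ v.card = d ∧
    {w : Finset ℕ | ↑w ⊆ A ∧ w.card = d ∧ toColex w ≤ toColex v}.ncard ≤ n}

def IsCompressedIn (A : Set ℕ) (d : ℕ) (F : Set (Finset ℕ)) : Prop :=
  (∀ u ∈ F, ↑u ⊆ A ∧ u.card = d) ∧
  ∀ u ∈ F, ∀ v : Finset ℕ, ↑v ⊆ A → v.card = d → toColex v ≤ toColex u → v ∈ F

def hatL (F : Set (Finset ℕ)) (k : ℕ) : Set (Finset ℕ) :=
  {u | (∀ x ∈ u, k < x) ∧ insert k u ∈ F}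

def hatR (F : Set (Finset ℕ)) (k : ℕ) : Set (Finset ℕ) :=
  {u | (∀ x ∈ u, x < k) ∧ insert k u ∈ F}

def leftComp (d : ℕ) (F : Set (Finset ℕ)) : Set (Finset ℕ) :=
  ⋃ k : ℕ, {v | ∃ w ∈ compressionIn {j | k < j} (d - 1) (hatL F k).ncard, v = insert k w}

def rightComp (d : ℕ) (F : Set (Finset ℕ)) : Set (Finset ℕ) :=
  ⋃ k : ℕ, {v | ∃ w ∈ compressionIn Set.univ (d - 1) (hatR F k).ncard, v = insert k w}

def BorelLE (u v : Finset ℕ) : Prop :=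
  List.Forall₂ (· ≤ ·) (u.sort (· ≤ ·)) (v.sort (· ≤ ·))

def IsShifted (F : Set (Finset ℕ)) : Prop :=
  ∀ u ∈ F, ∀ v, BorelLE v u → v ∈ F

def piShift (i : ℕ) : ℕ → ℕ := fun j => if j < i then j else j + 1

def IsBinRep (d m s : ℕ) (a : ℕ → ℕ) : Prop :=
  1 ≤ s ∧ s ≤ d ∧ (∀ i, s ≤ i → i < d → a i < a (i + 1)) ∧ s ≤ a s ∧
    m = ∑ i ∈ Finset.Icc s d, Nat.choose (a i) i

def famLE (F G : Set (Finset ℕ)) : Prop :=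
  F = G ∨ ∃ m ∈ G, m ∉ F ∧
    ∀ w : Finset ℕ, (w ∈ F ∧ w ∉ G) ∨ (w ∈ G ∧ w ∉ F) → toColex w ≤ toColex m

def IsSimplicialComplex (Δ : Set (Finset ℕ)) : Prop :=
  Δ.Finite ∧ ∀ F ∈ Δ, ∀ G ⊆ F, G ∈ Δ


section Aux
open Finset
open scoped symmDiff

/-- least natural number not in `v` -/
noncomputable def runLen (v : Finset ℕ) : ℕ := sInf {j | j ∉ v}

lemma runLen_not_mem (v : Finset ℕ) : runLen v ∉ v := by
  have : {j | j ∉ v}.Nonempty := by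
    obtain ⟨j, hj⟩ := v.exists_notMem
    exact ⟨j, hj⟩
  exact Nat.sInf_mem this

lemma runLen_le {v : Finset ℕ} {j : ℕ} (hj : j ∉ v) : runLen v ≤ j := Nat.sInf_le hj

lemma mem_of_lt_runLen {v : Finset ℕ} {j : ℕ} (hj : j < runLen v) : j ∈ v := by
  by_contra h
  exact absurd (runLen_le h) (Nat.not_le.2 hj)

lemma runLen_le_card (v : Finset ℕ) : runLen v ≤ v.card := by
  have h : Finset.range (runLen v) ⊆ v := fun j hj => mem_of_lt_runLen (Finset.mem_range.1 hj)
  simpa using Finset.card_le_card h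

def unshift (i : ℕ) : ℕ → ℕ := fun x => if x < i then x else x - 1

lemma piShift_strictMono (i : ℕ) : StrictMono (piShift i) := by
  intro a b hab
  unfold piShift
  split_ifs <;> omega

lemma piShift_mem_Inc1 (i : ℕ) : piShift i ∈ Inc1 := by
  refine ⟨piShift_strictMono i, fun j => ?_⟩
  unfold piShift; split_ifs <;> omega

lemma piShift_ne (i x : ℕ) : piShift i x ≠ i := by
  unfold piShift; split_ifs <;> omega

lemma unshift_piShift (i x : ℕ) : unshift i (piShift i x) = x := by
  unfold unshift piShift; split_ifs <;> omega

lemma piShift_unshift {i x : ℕ} (h : x ≠ i) : piShift i (unshift i x) = x := by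
  unfold unshift piShift; split_ifs <;> omega

lemma piShift_eq_self {i x : ℕ} (h : x < i) : piShift i x = x := if_pos h

/-- Every function in Inc1 acts on every finset like some `piShift`. -/
lemma inc1_eq_piShift {π : ℕ → ℕ} (hπ : π ∈ Inc1) :
    (∀ j, π j = j) ∨ ∃ i, π = piShift i := by
  obtain ⟨hmono, hle⟩ := hπ
  by_cases hid : ∀ j, π j = j
  · exact Or.inl hid
  · push_neg at hid
    right
    have hex : ∃ j, π j ≠ j := hid
    set i := Nat.find hex with hi
    have hlt : ∀ j, j < i → π j = j := fun j hj => by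
      have := Nat.find_min hex hj
      simpa using this
    have hge : ∀ k, π (i + k) = i + k + 1 := by
      intro k
      induction k with
      | zero =>
        have h1 : π i ≠ i := Nat.find_spec hex
        have h2 : i ≤ π i := hmono.le_apply
        have h3 : π i ≤ i + 1 := hle i
        rw [Nat.add_zero]
        omega
      | succ k ih =>
        have heq : i + (k + 1) = (i + k) + 1 := rfl
        rw [heq]
        have h1 : π (i + k) < π ((i + k) + 1) := hmono (by omega)
        have h2 : π ((i + k) + 1) ≤ (i + k) + 2 := hle ((i + k) + 1)
        omega
    refine ⟨i, funext fun j => ?_⟩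
    unfold piShift
    split_ifs with h
    · exact hlt j h
    · have := hge (j - i); rw [show i + (j - i) = j by omega] at this; omega

/-- Every function in Inc1 acts on every finset like some `piShift`. -/
lemma inc1_image_eq_piShift {π : ℕ → ℕ} (hπ : π ∈ Inc1) (v : Finset ℕ) :
    ∃ i, v.image π = v.image (piShift i) := by
  rcases inc1_eq_piShift hπ with hid | ⟨i, rfl⟩
  · refine ⟨v.sup id + 1, ?_⟩
    rw [Finset.image_congr (g := piShift (v.sup id + 1))]
    intro x hx
    rw [hid x, piShift_eq_self (by simpa using Nat.lt_succ_of_le (Finset.le_sup (f := id) hx))]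
  · exact ⟨i, rfl⟩

lemma mem_incF_iff {F : Set (Finset ℕ)} {v : Finset ℕ} :
    v ∈ incF F ↔ ∃ u ∈ F, ∃ i, v = u.image (piShift i) := by
  constructor
  · rintro ⟨u, hu, π, hπ, rfl⟩
    obtain ⟨i, hi⟩ := inc1_image_eq_piShift hπ u
    exact ⟨u, hu, i, hi⟩
  · rintro ⟨u, hu, i, rfl⟩
    exact ⟨u, hu, piShift i, piShift_mem_Inc1 i, rfl⟩

lemma incF_finite {F : Set (Finset ℕ)} (hF : F.Finite) : (incF F).Finite := by
  have hsub : incF F ⊆ ⋃ u ∈ F, (fun i => u.image (piShift i)) '' (Set.Iic (u.sup id + 1)) := by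
    intro v hv
    obtain ⟨u, hu, i, rfl⟩ := mem_incF_iff.1 hv
    simp only [Set.mem_iUnion, Set.mem_image, Set.mem_Iic]
    by_cases hi : i ≤ u.sup id + 1
    · exact ⟨u, hu, i, hi, rfl⟩
    · refine ⟨u, hu, u.sup id + 1, le_refl _, ?_⟩
      rw [Finset.image_congr (g := piShift i)]
      intro x hx
      have hx1 : x < u.sup id + 1 := by simpa using Nat.lt_succ_of_le (Finset.le_sup (f := id) hx)
      rw [piShift_eq_self hx1, piShift_eq_self (by omega)]
  exact Set.Finite.subset (Set.Finite.biUnion hF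
    (fun u _ => Set.Finite.image _ (Set.finite_Iic _))) hsub

lemma self_mem_incF {F : Set (Finset ℕ)} {u : Finset ℕ} (hu : u ∈ F) : u ∈ incF F := by
  refine mem_incF_iff.2 ⟨u, hu, u.sup id + 1, ?_⟩
  rw [Finset.image_congr (g := id), Finset.image_id]
  intro x hx
  exact piShift_eq_self (by simpa using Nat.lt_succ_of_le (Finset.le_sup (f := id) hx))

/-- binary weight -/
def gs (s : Finset ℕ) : ℕ := ∑ k ∈ s, 2 ^ k

lemma colex_le_iff_gs {s t : Finset ℕ} :
    toColex s ≤ toColex t ↔ gs s ≤ gs t :=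
  (Finset.geomSum_le_geomSum_iff_toColex_le_toColex (le_refl 2)).symm

/-- pointwise domination of injective images gives colex comparison -/
lemma colex_image_le_image {v : Finset ℕ} {f g : ℕ → ℕ}
    (hf : Set.InjOn f v) (hg : Set.InjOn g v) (hfg : ∀ x ∈ v, f x ≤ g x) :
    toColex (v.image f) ≤ toColex (v.image g) := by
  rw [colex_le_iff_gs]
  unfold gs
  rw [Finset.sum_image (fun a ha b hb h => hf ha hb h),
      Finset.sum_image (fun a ha b hb h => hg ha hb h)]
  exact Finset.sum_le_sum (fun x hx => Nat.pow_le_pow_right (by norm_num) (hfg x hx))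

lemma colex_insert_le_insert {a : ℕ} {s t : Finset ℕ} (has : a ∉ s) (hat : a ∉ t)
    (h : toColex s ≤ toColex t) :
    toColex (insert a s) ≤ toColex (insert a t) := by
  rw [colex_le_iff_gs] at h ⊢
  unfold gs at h ⊢
  rw [Finset.sum_insert has, Finset.sum_insert hat]
  omega

lemma unshift_injOn {i : ℕ} {v : Finset ℕ} (h : i ∉ v) : Set.InjOn (unshift i) v := by
  intro x hx y hy hxy
  have hxi : x ≠ i := fun he => h (he ▸ hx)
  have hyi : y ≠ i := fun he => h (he ▸ hy)
  unfold unshift at hxy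
  split_ifs at hxy <;> omega

lemma runLen_image_piShift {u : Finset ℕ} {i : ℕ} (h : i ≤ runLen u) :
    runLen (u.image (piShift i)) = i := by
  have h1 : i ∉ u.image (piShift i) := by
    simp only [Finset.mem_image, not_exists]
    exact fun x ⟨hx, hc⟩ => piShift_ne i x hc
  have h2 : ∀ j < i, j ∈ u.image (piShift i) := by
    intro j hj
    exact Finset.mem_image.2 ⟨j, mem_of_lt_runLen (lt_of_lt_of_le hj h), piShift_eq_self hj⟩
  refine le_antisymm (runLen_le h1) ?_
  by_contra hc
  push_neg at hc
  exact runLen_not_mem _ (h2 _ hc)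

lemma image_unshift_piShift (u : Finset ℕ) (i : ℕ) : (u.image (piShift i)).image (unshift i) = u := by
  rw [Finset.image_image]
  rw [Finset.image_congr (g := id), Finset.image_id]
  intro x _
  exact unshift_piShift i x

lemma image_piShift_unshift {v : Finset ℕ} {i : ℕ} (h : i ∉ v) :
    (v.image (unshift i)).image (piShift i) = v := by
  rw [Finset.image_image]
  rw [Finset.image_congr (g := id), Finset.image_id]
  intro x hx
  exact piShift_unshift (fun he => h (he ▸ hx))

/-- Lower bound: `|Inc F| ≥ Σ_{u∈F} (runLen u + 1)`. -/
lemma sum_runLen_le_incF_ncard {F : Set (Finset ℕ)} (hF : F.Finite) :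
    ∑ u ∈ hF.toFinset, (runLen u + 1) ≤ (incF F).ncard := by
  classical
  rw [Set.ncard_eq_toFinset_card _ (incF_finite hF)]
  have hcard : (hF.toFinset.sigma (fun u => Finset.range (runLen u + 1))).card
      = ∑ u ∈ hF.toFinset, (runLen u + 1) := by
    rw [Finset.card_sigma]
    simp
  rw [← hcard]
  apply Finset.card_le_card_of_injOn (fun p => p.1.image (piShift p.2))
  · rintro ⟨u, i⟩ hp
    simp only [Finset.mem_coe, Finset.mem_sigma, Finset.mem_range, Set.Finite.mem_toFinset] at hp ⊢
    exact mem_incF_iff.2 ⟨u, hp.1, i, rfl⟩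
  · rintro ⟨u, i⟩ hp ⟨u', i'⟩ hq heq
    simp only [Finset.coe_sigma, Set.mem_sigma_iff, Finset.mem_coe, Finset.mem_range,
      Set.Finite.mem_toFinset] at hp hq
    simp only at heq
    have hi : i ≤ runLen u := by omega
    have hi' : i' ≤ runLen u' := by omega
    have h1 : i = i' := by
      have := runLen_image_piShift hi
      have h2 := runLen_image_piShift hi'
      rw [heq] at this
      omega
    subst h1
    have : u = u' := by
      have := congrArg (fun w => Finset.image (unshift i) w) heq
      simpa only [image_unshift_piShift] using this
    simp [this]

/-- Upper bound for compressed families: `|Inc G| ≤ Σ_{u∈G} (runLen u + 1)`. -/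
lemma incF_ncard_le_sum_runLen {d : ℕ} {G : Set (Finset ℕ)} (hGfin : G.Finite)
    (hGd : ∀ u ∈ G, u.card = d) (hGc : IsCompressedIn Set.univ d G) :
    (incF G).ncard ≤ ∑ u ∈ hGfin.toFinset, (runLen u + 1) := by
  classical
  rw [Set.ncard_eq_toFinset_card _ (incF_finite hGfin)]
  have hcard : (hGfin.toFinset.sigma (fun u => Finset.range (runLen u + 1))).card
      = ∑ u ∈ hGfin.toFinset, (runLen u + 1) := by
    rw [Finset.card_sigma]; simp
  rw [← hcard]
  apply Finset.card_le_card_of_injOn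
    (fun v => (⟨v.image (unshift (runLen v)), runLen v⟩ : Σ _ : Finset ℕ, ℕ))
  · intro v hv
    rw [Finset.mem_coe, Set.Finite.mem_toFinset] at hv
    obtain ⟨u, hu, i, rfl⟩ := mem_incF_iff.1 hv
    set v := u.image (piShift i) with hvdef
    have hiv : i ∉ v := by
      simp only [hvdef, Finset.mem_image, not_exists]
      exact fun x ⟨hx, hc⟩ => piShift_ne i x hc
    have hri : runLen v ≤ i := runLen_le hiv
    have hrv : runLen v ∉ v := runLen_not_mem v
    have huv : v.image (unshift i) = u := image_unshift_piShift u i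
    have hcolex : toColex (v.image (unshift (runLen v)))
        ≤ toColex u := by
      rw [← huv]
      apply colex_image_le_image (unshift_injOn hrv) (unshift_injOn hiv)
      intro x hx
      unfold unshift
      split_ifs <;> omega
    have hcardv : (v.image (unshift (runLen v))).card = d := by
      rw [Finset.card_image_of_injOn (unshift_injOn hrv), hvdef,
        Finset.card_image_of_injective _ (piShift_strictMono i).injective]
      exact hGd u hu
    have hmem : v.image (unshift (runLen v)) ∈ G :=
      hGc.2 u hu _ (by simp) hcardv hcolex
    simp only [Finset.mem_coe, Finset.mem_sigma, Finset.mem_range, Set.Finite.mem_toFinset]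
    refine ⟨hmem, ?_⟩
    have : ∀ j < runLen v, j ∈ v.image (unshift (runLen v)) := by
      intro j hj
      refine Finset.mem_image.2 ⟨j, mem_of_lt_runLen hj, ?_⟩
      unfold unshift
      rw [if_pos hj]
    by_contra hc
    push_neg at hc
    have h2 : runLen (v.image (unshift (runLen v))) < runLen v := by omega
    exact runLen_not_mem _ (this _ h2)
  · intro v hv v' hv' heq
    have h2' : runLen v = runLen v' := congrArg (fun p => p.2) heq
    have h1 : v.image (unshift (runLen v)) = v'.image (unshift (runLen v')) :=
      congrArg (fun p => p.1) heq
    have hv1 : (v.image (unshift (runLen v))).image (piShift (runLen v)) = v :=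
      image_piShift_unshift (runLen_not_mem v)
    have hv2 : (v'.image (unshift (runLen v'))).image (piShift (runLen v')) = v' :=
      image_piShift_unshift (runLen_not_mem v')
    rw [← hv1, ← hv2, h1, h2']

/-- Key colex lemma: replacing an element below the minimum while moving to a
colex-smaller set of the same size, against lowering the max set's new element to 0. -/
lemma gs_insert_lt {s t : Finset ℕ} {x : ℕ} (hcard : s.card = t.card)
    (hle : toColex s ≤ toColex t) (hne : s ≠ t)
    (hx : ∀ c ∈ s, x < c) (h0 : 0 ∉ t) :
    gs (insert x s) < gs (insert 0 t) := by
  classical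
  have hsne : (s ∆ t).Nonempty := Finset.symmDiff_nonempty.2 hne
  set z := (s ∆ t).max' hsne with hzdef
  have hz : z ∈ t := (Finset.Colex.toColex_le_toColex_iff_max'_mem.1 hle) hne
  have hzmem : z ∈ s ∆ t := Finset.max'_mem _ hsne
  have hzs : z ∉ s := by
    rcases Finset.mem_symmDiff.1 hzmem with ⟨_, h⟩ | ⟨_, h⟩
    · exact absurd hz h
    · exact h
  have htail : ∀ c, z < c → (c ∈ s ↔ c ∈ t) := by
    intro c hc
    by_contra hcon
    have hcmem : c ∈ s ∆ t := by
      rw [Finset.mem_symmDiff]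
      tauto
    exact absurd (Finset.le_max' _ _ hcmem) (by omega)
  have hlow : ∃ c ∈ s, c < z := by
    by_contra hcon
    push_neg at hcon
    have hsub : s ⊆ t := by
      intro c hc
      have h1 : z ≤ c := hcon c hc
      have h2 : c ≠ z := fun he => hzs (he ▸ hc)
      exact (htail c (by omega)).1 hc
    exact hne (Finset.eq_of_subset_of_card_le hsub (by omega))
  obtain ⟨c₀, hc₀s, hc₀z⟩ := hlow
  have hxz : x < z := lt_trans (hx c₀ hc₀s) hc₀z
  have hxs : x ∉ s := fun hxmem => lt_irrefl x (hx x hxmem)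
  have e1 : gs (insert x s) = 2 ^ x + gs s := Finset.sum_insert hxs
  have e2 : gs (insert 0 t) = 1 + gs t := by
    rw [gs, Finset.sum_insert h0, pow_zero]; rfl
  have e3 : gs s = (∑ c ∈ s.filter (fun c => z < c), 2 ^ c)
      + (∑ c ∈ s.filter (fun c => ¬ z < c), 2 ^ c) :=
    (Finset.sum_filter_add_sum_filter_not s _ _).symm
  have e4 : gs t = (∑ c ∈ t.filter (fun c => z < c), 2 ^ c)
      + (∑ c ∈ t.filter (fun c => ¬ z < c), 2 ^ c) :=
    (Finset.sum_filter_add_sum_filter_not t _ _).symm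
  have efil : s.filter (fun c => z < c) = t.filter (fun c => z < c) := by
    ext c
    simp only [Finset.mem_filter]
    constructor
    · rintro ⟨h1, h2⟩; exact ⟨(htail c h2).1 h1, h2⟩
    · rintro ⟨h1, h2⟩; exact ⟨(htail c h2).2 h1, h2⟩
  have hlowlt : 2 ^ x + (∑ c ∈ s.filter (fun c => ¬ z < c), 2 ^ c) < 2 ^ z := by
    have hxnot : x ∉ s.filter (fun c => ¬ z < c) := fun hmem => hxs (Finset.mem_filter.1 hmem).1
    have : 2 ^ x + (∑ c ∈ s.filter (fun c => ¬ z < c), 2 ^ c)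
        = ∑ c ∈ insert x (s.filter (fun c => ¬ z < c)), 2 ^ c :=
      (Finset.sum_insert hxnot).symm
    rw [this]
    apply Nat.geomSum_lt (le_refl 2)
    intro k hk
    rcases Finset.mem_insert.1 hk with rfl | hk
    · exact hxz
    · obtain ⟨hks, hkz⟩ := Finset.mem_filter.1 hk
      have : k ≠ z := fun he => hzs (he ▸ hks)
      omega
  have hzbig : 2 ^ z ≤ ∑ c ∈ t.filter (fun c => ¬ z < c), 2 ^ c := by
    apply Finset.single_le_sum (fun c _ => Nat.zero_le _)
    exact Finset.mem_filter.2 ⟨hz, by omega⟩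
  rw [efil] at e3
  omega

noncomputable def mn (s : Finset ℕ) : ℕ := sInf ↑s

lemma mn_mem {s : Finset ℕ} (h : s.Nonempty) : mn s ∈ s :=
  Nat.sInf_mem (Finset.coe_nonempty.2 h)

lemma mn_le {s : Finset ℕ} {x : ℕ} (h : x ∈ s) : mn s ≤ x := Nat.sInf_le h

lemma hatL_finite {F : Set (Finset ℕ)} (hF : F.Finite) (k : ℕ) : (hatL F k).Finite := by
  apply Set.Finite.subset (hF.image (fun u => u.erase k))
  intro s hs
  have hk : k ∉ s := fun hk => lt_irrefl k (hs.1 k hk)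
  exact ⟨insert k s, hs.2, Finset.erase_insert hk⟩

/-- For `u ∈ H` (all cards `d ≥ 2`, `H` right-compressed), removing the minimum and
inserting 0 stays in `H`; i.e. `u.erase (mn u) ∈ hatL H 0`. -/
lemma erase_mn_mem_hatL {d : ℕ} (hd2 : 2 ≤ d) {H : Set (Finset ℕ)}
    (hHd : ∀ u ∈ H, u.card = d)
    (hr : ∀ k : ℕ, IsCompressedIn Set.univ (d - 1) (hatR H k))
    {u : Finset ℕ} (hu : u ∈ H) : u.erase (mn u) ∈ hatL H 0 := by
  have hucard : u.card = d := hHd u hu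
  have hune : u.Nonempty := Finset.card_pos.1 (by omega)
  have helts : ∀ x ∈ u.erase (mn u), 0 < x := by
    intro x hx
    have h1 : x ∈ u := Finset.mem_of_mem_erase hx
    have h2 : x ≠ mn u := Finset.ne_of_mem_erase hx
    have h3 : mn u ≤ x := mn_le h1
    omega
  refine ⟨helts, ?_⟩
  by_cases h0 : 0 ∈ u
  · have hmn0 : mn u = 0 := Nat.le_zero.1 (mn_le h0)
    rw [hmn0, Finset.insert_erase h0]
    exact hu
  · set m := u.max' hune with hmdef
    set w := u.erase m with hwdef
    have hmu : m ∈ u := u.max'_mem hune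
    have hwcard : w.card = d - 1 := by
      rw [hwdef, Finset.card_erase_of_mem hmu, hucard]
    have hwne : w.Nonempty := Finset.card_pos.1 (by omega)
    have huw : u = insert m w := (Finset.insert_erase hmu).symm
    have hw : w ∈ hatR H m := by
      refine ⟨fun x hx => ?_, by rw [← huw]; exact hu⟩
      have h1 : x ∈ u := Finset.mem_of_mem_erase hx
      have h2 : x ≠ m := Finset.ne_of_mem_erase hx
      exact lt_of_le_of_ne (Finset.le_max' u x h1) h2
    have h0w : 0 ∉ w := fun h => h0 (Finset.mem_of_mem_erase h)
    set mw := mn w with hmwdef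
    have hmww : mw ∈ w := mn_mem hwne
    have h0we : 0 ∉ w.erase mw := fun h => h0w (Finset.mem_of_mem_erase h)
    have hcard0 : (insert 0 (w.erase mw)).card = d - 1 := by
      rw [Finset.card_insert_of_notMem h0we, Finset.card_erase_of_mem hmww, hwcard]
      omega
    have hcolex : toColex (insert 0 (w.erase mw)) ≤ toColex w := by
      rw [colex_le_iff_gs]
      have e1 : gs (insert 0 (w.erase mw)) = 2 ^ 0 + gs (w.erase mw) := Finset.sum_insert h0we
      have e2 : 2 ^ mw + gs (w.erase mw) = gs w := Finset.add_sum_erase _ _ hmww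
      have : (1 : ℕ) ≤ 2 ^ mw := Nat.one_le_two_pow
      omega
    have hw0 : insert 0 (w.erase mw) ∈ hatR H m :=
      (hr m).2 w hw _ (by simp) hcard0 hcolex
    have hmem : insert m (insert 0 (w.erase mw)) ∈ H := hw0.2
    have hmnuw : mn u ∈ w := by
      obtain ⟨c, hc⟩ := hwne
      have hcm : c < m := hw.1 c hc
      have h1 : mn u ≤ c := mn_le (Finset.mem_of_mem_erase hc)
      have hmnum : mn u ≠ m := by omega
      exact Finset.mem_erase.2 ⟨hmnum, mn_mem hune⟩
    have hmw_eq : mw = mn u := le_antisymm (mn_le hmnuw) (mn_le (Finset.mem_of_mem_erase hmww))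
    have hmwm : mw ≠ m := by
      have : mw < m := hw.1 mw hmww
      omega
    have hident : insert m (insert 0 (w.erase mw)) = insert 0 (u.erase (mn u)) := by
      rw [Finset.insert_comm, ← hmw_eq]
      congr 1
      rw [huw, Finset.erase_insert_of_ne hmwm.symm]
    rw [← hident]
    exact hmem

/-- Step 1: `|H| ≤ Σ_{s ∈ hatL H 0} mn s`. -/
lemma card_le_sum_mn {d : ℕ} (hd2 : 2 ≤ d) {H : Set (Finset ℕ)} (hHfin : H.Finite)
    (hHd : ∀ u ∈ H, u.card = d)
    (hr : ∀ k : ℕ, IsCompressedIn Set.univ (d - 1) (hatR H k)) :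
    hHfin.toFinset.card ≤ ∑ s ∈ (hatL_finite hHfin 0).toFinset, mn s := by
  classical
  have hcard : ((hatL_finite hHfin 0).toFinset.sigma (fun s => Finset.range (mn s))).card
      = ∑ s ∈ (hatL_finite hHfin 0).toFinset, mn s := by
    rw [Finset.card_sigma]; simp
  rw [← hcard]
  apply Finset.card_le_card_of_injOn (fun u => (⟨u.erase (mn u), mn u⟩ : Σ _ : Finset ℕ, ℕ))
  · intro u hu
    rw [Finset.mem_coe, Set.Finite.mem_toFinset] at hu
    have hune : u.Nonempty := Finset.card_pos.1 (by rw [hHd u hu]; omega)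
    have hs : u.erase (mn u) ∈ hatL H 0 := erase_mn_mem_hatL hd2 hHd hr hu
    simp only [Finset.mem_coe, Finset.mem_sigma, Finset.mem_range, Set.Finite.mem_toFinset]
    refine ⟨hs, ?_⟩
    -- mn u < mn (u.erase (mn u))
    have hscard : (u.erase (mn u)).card = d - 1 := by
      rw [Finset.card_erase_of_mem (mn_mem hune), hHd u hu]
    have hsne : (u.erase (mn u)).Nonempty := Finset.card_pos.1 (by omega)
    have h1 : mn (u.erase (mn u)) ∈ u.erase (mn u) := mn_mem hsne
    have h2 := Finset.ne_of_mem_erase h1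
    have h3 := mn_le (Finset.mem_of_mem_erase h1)
    omega
  · intro u hu u' hu' heq
    have h2 : mn u = mn u' := congrArg (fun p => p.2) heq
    have h1 : u.erase (mn u) = u'.erase (mn u') := congrArg (fun p => p.1) heq
    simp only [Finset.mem_coe, Set.Finite.mem_toFinset] at hu hu'
    have hune : u.Nonempty := Finset.card_pos.1 (by rw [hHd u hu]; omega)
    have hune' : u'.Nonempty := Finset.card_pos.1 (by rw [hHd u' hu']; omega)
    rw [← Finset.insert_erase (mn_mem hune), ← Finset.insert_erase (mn_mem hune'), h1, h2]

lemma hatL_zero_compressed {d : ℕ} {G : Set (Finset ℕ)}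
    (hGd : ∀ u ∈ G, u.card = d) (hGc : IsCompressedIn Set.univ d G) (hd : 1 ≤ d) :
    IsCompressedIn {j | 0 < j} (d - 1) (hatL G 0) := by
  refine ⟨?_, ?_⟩
  · intro s hs
    refine ⟨fun x hx => hs.1 x hx, ?_⟩
    have h0s : 0 ∉ s := fun h => lt_irrefl 0 (hs.1 0 h)
    have := hGd _ hs.2
    rw [Finset.card_insert_of_notMem h0s] at this
    omega
  · intro s hs v hv hvcard hvle
    have h0s : 0 ∉ s := fun h => lt_irrefl 0 (hs.1 0 h)
    have h0v : 0 ∉ v := fun h => by simpa using hv h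
    have hle : toColex (insert 0 v) ≤ toColex (insert 0 s) :=
      colex_insert_le_insert h0v h0s hvle
    have hcard : (insert 0 v).card = d := by
      rw [Finset.card_insert_of_notMem h0v, hvcard]; omega
    exact ⟨fun x hx => hv hx, hGc.2 _ hs.2 _ (by simp) hcard hle⟩

/-- Step 2: if `hatL G 0` is nonempty with colex-max `t`, then
`1 + Σ_{s ∈ hatL G 0 \ {t}} mn s ≤ |G|`. -/
lemma one_add_sum_mn_le_card {d : ℕ} (hd2 : 2 ≤ d) {G : Set (Finset ℕ)} (hGfin : G.Finite)
    (hGd : ∀ u ∈ G, u.card = d) (hGc : IsCompressedIn Set.univ d G)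
    {t : Finset ℕ} (ht : t ∈ hatL G 0)
    (htmax : ∀ s ∈ hatL G 0, toColex s ≤ toColex t) :
    1 + ∑ s ∈ ((hatL_finite hGfin 0).toFinset.erase t), mn s ≤ hGfin.toFinset.card := by
  classical
  have hGcomp := hatL_zero_compressed hGd hGc (by omega)
  have htG : insert 0 t ∈ G := ht.2
  have htGf : insert 0 t ∈ hGfin.toFinset := Set.Finite.mem_toFinset _ |>.2 htG
  have hkey : (((hatL_finite hGfin 0).toFinset.erase t).sigma (fun s => Finset.range (mn s))).card
      ≤ (hGfin.toFinset.erase (insert 0 t)).card := by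
    apply Finset.card_le_card_of_injOn (fun p => insert p.2 p.1)
    · rintro ⟨s, x⟩ hp
      simp only [Finset.mem_coe, Finset.mem_sigma, Finset.mem_erase, Set.Finite.mem_toFinset,
        Finset.mem_range] at hp
      obtain ⟨⟨hst, hs⟩, hx⟩ := hp
      have hxs : ∀ c ∈ s, x < c := fun c hc => lt_of_lt_of_le hx (mn_le hc)
      have hscard : s.card = d - 1 := (hGcomp.1 s hs).2
      have htcard : t.card = d - 1 := (hGcomp.1 t ht).2
      have h0t : 0 ∉ t := fun h => lt_irrefl 0 (ht.1 0 h)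
      have hgs : gs (insert x s) < gs (insert 0 t) :=
        gs_insert_lt (by omega) (htmax s hs) hst hxs h0t
      have hle : toColex (insert x s) ≤ toColex (insert 0 t) :=
        colex_le_iff_gs.2 (le_of_lt hgs)
      have hne : insert x s ≠ insert 0 t := by
        intro he
        rw [he] at hgs
        exact lt_irrefl _ hgs
      have hxns : x ∉ s := fun h => lt_irrefl x (hxs x h)
      have hcard : (insert x s).card = d := by
        rw [Finset.card_insert_of_notMem hxns, hscard]; omega
      have hmem : insert x s ∈ G := hGc.2 _ htG _ (by simp) hcard hle
      simp only [Finset.mem_coe, Finset.mem_erase, Set.Finite.mem_toFinset]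
      exact ⟨hne, hmem⟩
    · rintro ⟨s, x⟩ hp ⟨s', x'⟩ hp' heq
      simp only [Finset.coe_sigma, Set.mem_sigma_iff, Finset.mem_coe, Finset.mem_erase,
        Set.Finite.mem_toFinset, Finset.mem_range] at hp hp'
      simp only at heq
      have hxs : ∀ c ∈ s, x < c := fun c hc => lt_of_lt_of_le hp.2 (mn_le hc)
      have hxs' : ∀ c ∈ s', x' < c := fun c hc => lt_of_lt_of_le hp'.2 (mn_le hc)
      have hxns : x ∉ s := fun h => lt_irrefl x (hxs x h)
      have hxns' : x' ∉ s' := fun h => lt_irrefl x' (hxs' x' h)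
      have hmn : mn (insert x s) = x := by
        refine le_antisymm (mn_le (Finset.mem_insert_self x s)) ?_
        have := mn_mem (Finset.insert_nonempty x s)
        rcases Finset.mem_insert.1 this with he | hmem
        · omega
        · exact le_of_lt (hxs _ hmem)
      have hmn' : mn (insert x' s') = x' := by
        refine le_antisymm (mn_le (Finset.mem_insert_self x' s')) ?_
        have := mn_mem (Finset.insert_nonempty x' s')
        rcases Finset.mem_insert.1 this with he | hmem
        · omega
        · exact le_of_lt (hxs' _ hmem)
      have hx : x = x' := by rw [← hmn, ← hmn', heq]
      have hserase : (insert x s).erase x = s := Finset.erase_insert hxns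
      have hserase' : (insert x' s').erase x' = s' := Finset.erase_insert hxns'
      subst hx
      have hs : s = s' := by rw [← hserase, ← hserase', heq]
      simp [hs]
  rw [Finset.card_sigma] at hkey
  simp only [Finset.card_range] at hkey
  have : (hGfin.toFinset.erase (insert 0 t)).card = hGfin.toFinset.card - 1 :=
    Finset.card_erase_of_mem htGf
  have hpos : 1 ≤ hGfin.toFinset.card := Finset.card_pos.2 ⟨_, htGf⟩
  omega

/-- The central lemma: under the hypotheses, `hatL G 0 ⊆ hatL H 0`. -/
lemma hatL_zero_subset {d : ℕ} (hd2 : 2 ≤ d) {G H : Set (Finset ℕ)}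
    (hGfin : G.Finite) (hGd : ∀ u ∈ G, u.card = d)
    (hHfin : H.Finite) (hHd : ∀ u ∈ H, u.card = d)
    (hcard : G.ncard = H.ncard)
    (hGc : IsCompressedIn Set.univ d G)
    (hl : ∀ k : ℕ, IsCompressedIn {j | k < j} (d - 1) (hatL H k))
    (hr : ∀ k : ℕ, IsCompressedIn Set.univ (d - 1) (hatR H k)) :
    hatL G 0 ⊆ hatL H 0 := by
  classical
  by_contra hnot
  obtain ⟨s0, hs0G, hs0H⟩ := Set.not_subset.1 hnot
  have hGcomp := hatL_zero_compressed hGd hGc (by omega)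
  have hHcomp := hl 0
  -- colex-max of hatL G 0
  have hAGne : ((hatL_finite hGfin 0).toFinset).Nonempty :=
    ⟨s0, (Set.Finite.mem_toFinset _).2 hs0G⟩
  obtain ⟨t, htmem, htmax'⟩ := Finset.exists_max_image ((hatL_finite hGfin 0).toFinset)
    (fun s => toColex s) hAGne
  rw [Set.Finite.mem_toFinset] at htmem
  have htmax : ∀ s ∈ hatL G 0, toColex s ≤ toColex t :=
    fun s hs => htmax' s ((Set.Finite.mem_toFinset _).2 hs)
  -- hatL H 0 ⊆ (hatL G 0).erase t
  have hsub : (hatL_finite hHfin 0).toFinset ⊆ ((hatL_finite hGfin 0).toFinset).erase t := by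
    intro w hw
    rw [Set.Finite.mem_toFinset] at hw
    -- w ∈ hatL G 0
    have hwG : w ∈ hatL G 0 := by
      rcases le_total (toColex w) (toColex s0) with hcase | hcase
      · exact hGcomp.2 s0 hs0G w (fun x hx => hHcomp.1 w hw |>.1 hx) (hHcomp.1 w hw).2 hcase
      · exact absurd (hHcomp.2 w hw s0 (fun x hx => hGcomp.1 s0 hs0G |>.1 hx)
          (hGcomp.1 s0 hs0G).2 hcase) hs0H
    have hwt : w ≠ t := by
      rintro rfl
      -- then hatL G 0 ⊆ hatL H 0, contradiction
      apply hs0H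
      exact hHcomp.2 w hw s0 (fun x hx => hGcomp.1 s0 hs0G |>.1 hx)
        (hGcomp.1 s0 hs0G).2 (htmax s0 hs0G)
    exact Finset.mem_erase.2 ⟨hwt, (Set.Finite.mem_toFinset _).2 hwG⟩
  -- counting
  have h1 : hHfin.toFinset.card ≤ ∑ s ∈ (hatL_finite hHfin 0).toFinset, mn s :=
    card_le_sum_mn hd2 hHfin hHd hr
  have h2 : ∑ s ∈ (hatL_finite hHfin 0).toFinset, mn s
      ≤ ∑ s ∈ ((hatL_finite hGfin 0).toFinset).erase t, mn s :=
    Finset.sum_le_sum_of_subset hsub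
  have h3 : 1 + ∑ s ∈ ((hatL_finite hGfin 0).toFinset.erase t), mn s ≤ hGfin.toFinset.card :=
    one_add_sum_mn_le_card hd2 hGfin hGd hGc htmem htmax
  have hcards : hGfin.toFinset.card = hHfin.toFinset.card := by
    rw [← Set.ncard_eq_toFinset_card _ hGfin, ← Set.ncard_eq_toFinset_card _ hHfin, hcard]
  omega

lemma runLen_eq_filter_card {u : Finset ℕ} {d : ℕ} (hcard : u.card = d) :
    runLen u = ((Finset.range d).filter (fun k => Finset.range (k + 1) ⊆ u)).card := by
  have hle : runLen u ≤ d := hcard ▸ runLen_le_card u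
  have hiff : ∀ k, Finset.range (k + 1) ⊆ u ↔ k < runLen u := by
    intro k
    constructor
    · intro hsub
      by_contra hc
      push_neg at hc
      exact runLen_not_mem u (hsub (Finset.mem_range.2 (by omega)))
    · intro hk j hj
      exact mem_of_lt_runLen (by have := Finset.mem_range.1 hj; omega)
  have : (Finset.range d).filter (fun k => Finset.range (k + 1) ⊆ u)
      = Finset.range (runLen u) := by
    ext k
    simp only [Finset.mem_filter, Finset.mem_range, hiff]
    omega
  rw [this, Finset.card_range]

/-- Σ runLen over a finite family with all cards `d` equals the sum over `k < d` of the number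
of members containing `{0,…,k}`. -/
lemma sum_runLen_eq {F : Set (Finset ℕ)} (hF : F.Finite) {d : ℕ} (hFd : ∀ u ∈ F, u.card = d) :
    ∑ u ∈ hF.toFinset, runLen u
      = ∑ k ∈ Finset.range d, (hF.toFinset.filter (fun u => Finset.range (k + 1) ⊆ u)).card := by
  classical
  have : ∀ u ∈ hF.toFinset, runLen u
      = ∑ k ∈ Finset.range d, if Finset.range (k + 1) ⊆ u then 1 else 0 := by
    intro u hu
    rw [runLen_eq_filter_card (hFd u ((Set.Finite.mem_toFinset _).1 hu))]
    rw [Finset.card_filter]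
  rw [Finset.sum_congr rfl this, Finset.sum_comm]
  congr 1
  ext k
  rw [Finset.card_filter]

lemma filter_card_eq_hatL {F : Set (Finset ℕ)} (hF : F.Finite) (k : ℕ) :
    (hF.toFinset.filter (fun u => Finset.range (k + 1) ⊆ u)).card
      = ((hatL_finite hF 0).toFinset.filter (fun s => Finset.Icc 1 k ⊆ s)).card := by
  classical
  apply Finset.card_bij (fun u _ => u.erase 0)
  · intro u hu
    simp only [Finset.mem_filter, Set.Finite.mem_toFinset] at hu ⊢
    obtain ⟨huF, hsub⟩ := hu
    have h0u : 0 ∈ u := hsub (Finset.mem_range.2 (by omega))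
    refine ⟨⟨fun x hx => ?_, ?_⟩, fun j hj => ?_⟩
    · have := Finset.mem_erase.1 hx
      omega
    · rw [Finset.insert_erase h0u]; exact huF
    · have hj' := Finset.mem_Icc.1 hj
      exact Finset.mem_erase.2 ⟨by omega, hsub (Finset.mem_range.2 (by omega))⟩
  · intro u hu u' hu' heq
    simp only [Finset.mem_filter, Set.Finite.mem_toFinset] at hu hu'
    have h0u : 0 ∈ u := hu.2 (Finset.mem_range.2 (by omega))
    have h0u' : 0 ∈ u' := hu'.2 (Finset.mem_range.2 (by omega))
    rw [← Finset.insert_erase h0u, ← Finset.insert_erase h0u', heq]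
  · intro s hs
    simp only [Finset.mem_filter, Set.Finite.mem_toFinset] at hs
    obtain ⟨hsA, hcond⟩ := hs
    have h0s : 0 ∉ s := fun h => lt_irrefl 0 (hsA.1 0 h)
    refine ⟨insert 0 s, ?_, Finset.erase_insert h0s⟩
    simp only [Finset.mem_filter, Set.Finite.mem_toFinset]
    refine ⟨hsA.2, fun j hj => ?_⟩
    have hjk : j < k + 1 := Finset.mem_range.1 hj
    rcases Nat.eq_zero_or_pos j with rfl | hj1
    · exact Finset.mem_insert_self 0 s
    · exact Finset.mem_insert_of_mem (hcond (Finset.mem_Icc.2 ⟨hj1, by omega⟩))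

lemma singleton_image_injective : Function.Injective (fun y => ({y} : Finset ℕ)) :=
  fun a b h => by simpa using h

end Aux

theorem stmt12 (d : ℕ) (hd : 1 ≤ d) (G H : Set (Finset ℕ))
    (hGfin : G.Finite) (hGd : ∀ u ∈ G, u.card = d)
    (hHfin : H.Finite) (hHd : ∀ u ∈ H, u.card = d)
    (hcard : G.ncard = H.ncard)
    (hGc : IsCompressedIn Set.univ d G)
    (hl : ∀ k : ℕ, IsCompressedIn {j | k < j} (d - 1) (hatL H k))
    (hr : ∀ k : ℕ, IsCompressedIn Set.univ (d - 1) (hatR H k)) :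
    (incF G).ncard ≤ (incF H).ncard := by
  classical
  rcases eq_or_lt_of_le hd with hd1 | hd2
  · -- d = 1
    subst hd1
    by_cases hn0 : G.ncard = 0
    · have hGe : G = ∅ := (Set.ncard_eq_zero hGfin).1 hn0
      have hie : incF G = ∅ := by
        rw [hGe]
        ext v
        simp only [Set.mem_empty_iff_false, iff_false]
        rintro ⟨u, hu, _⟩
        exact hu
      simp [hie]
    · set n := G.ncard with hn
      have hn1 : 1 ≤ n := by omega
      -- every element of G is a singleton {x} with x < n
      have hGsing : ∀ u ∈ G, ∃ x, x < n ∧ u = {x} := by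
        intro u hu
        obtain ⟨x, hx⟩ := Finset.card_eq_one.1 (hGd u hu)
        refine ⟨x, ?_, hx⟩
        have hsub : (fun y => ({y} : Finset ℕ)) '' (Set.Iic x) ⊆ G := by
          rintro v ⟨y, hy, rfl⟩
          apply hGc.2 u hu _ (by simp) (Finset.card_singleton y)
          rw [colex_le_iff_gs, hx]
          unfold gs
          rw [Finset.sum_singleton, Finset.sum_singleton]
          exact Nat.pow_le_pow_right (by norm_num) hy
        have hle := Set.ncard_le_ncard hsub hGfin
        rw [Set.ncard_image_of_injective _ singleton_image_injective, ← Finset.coe_Iic,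
          Set.ncard_coe_finset, Nat.card_Iic] at hle
        omega
      -- incF G ⊆ singletons of Iic n
      have hsub2 : incF G ⊆ (fun y => ({y} : Finset ℕ)) '' (Set.Iic n) := by
        intro v hv
        obtain ⟨u, hu, i, rfl⟩ := mem_incF_iff.1 hv
        obtain ⟨x, hxn, rfl⟩ := hGsing u hu
        refine ⟨piShift i x, ?_, (Finset.image_singleton _ _).symm⟩
        have : piShift i x ≤ x + 1 := (piShift_mem_Inc1 i).2 x
        simp only [Set.mem_Iic]
        omega
      have hub : (incF G).ncard ≤ n + 1 := by
        have := Set.ncard_le_ncard hsub2 ((Set.finite_Iic n).image _)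
        rwa [Set.ncard_image_of_injective _ singleton_image_injective, ← Finset.coe_Iic,
          Set.ncard_coe_finset, Nat.card_Iic] at this
      -- lower bound for H
      have hHn : H.ncard = n := hcard.symm
      have hHne : H.Nonempty := Set.nonempty_of_ncard_ne_zero (by omega)
      have hHfne : hHfin.toFinset.Nonempty := by
        obtain ⟨u, hu⟩ := hHne
        exact ⟨u, (Set.Finite.mem_toFinset _).2 hu⟩
      obtain ⟨u0, hu0f, hmax⟩ := Finset.exists_max_image hHfin.toFinset (fun u => u.sup id) hHfne
      rw [Set.Finite.mem_toFinset] at hu0f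
      obtain ⟨x0, hx0⟩ := Finset.card_eq_one.1 (hHd u0 hu0f)
      have hxmax : ∀ u ∈ H, u.sup id ≤ x0 := by
        intro u hu
        have := hmax u ((Set.Finite.mem_toFinset _).2 hu)
        rw [hx0] at this
        simpa using this
      have hnotmem : ({x0 + 1} : Finset ℕ) ∉ H := by
        intro hmem
        have := hxmax _ hmem
        simp at this
      have hshift : ({x0 + 1} : Finset ℕ) ∈ incF H := by
        refine mem_incF_iff.2 ⟨{x0}, hx0 ▸ hu0f, 0, ?_⟩
        rw [Finset.image_singleton]
        simp [piShift]
      have hsub3 : insert ({x0 + 1} : Finset ℕ) H ⊆ incF H := by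
        intro v hv
        rcases Set.mem_insert_iff.1 hv with rfl | hv
        · exact hshift
        · exact self_mem_incF hv
      have hlb : n + 1 ≤ (incF H).ncard := by
        have h1 := Set.ncard_le_ncard hsub3 (incF_finite hHfin)
        rwa [Set.ncard_insert_of_notMem hnotmem hHfin, hHn] at h1
      omega
  · -- d ≥ 2
    have hd2' : 2 ≤ d := hd2
    have hsub := hatL_zero_subset hd2' hGfin hGd hHfin hHd hcard hGc hl hr
    have hcards : hGfin.toFinset.card = hHfin.toFinset.card := by
      rw [← Set.ncard_eq_toFinset_card _ hGfin, ← Set.ncard_eq_toFinset_card _ hHfin, hcard]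
    have hAsub : (hatL_finite hGfin 0).toFinset ⊆ (hatL_finite hHfin 0).toFinset := by
      intro s hs
      rw [Set.Finite.mem_toFinset] at hs ⊢
      exact hsub hs
    have hsumRL : ∑ u ∈ hGfin.toFinset, runLen u ≤ ∑ u ∈ hHfin.toFinset, runLen u := by
      rw [sum_runLen_eq hGfin hGd, sum_runLen_eq hHfin hHd]
      apply Finset.sum_le_sum
      intro k _
      rw [filter_card_eq_hatL hGfin k, filter_card_eq_hatL hHfin k]
      exact Finset.card_le_card (Finset.filter_subset_filter _ hAsub)
    calc (incF G).ncard ≤ ∑ u ∈ hGfin.toFinset, (runLen u + 1) :=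
        incF_ncard_le_sum_runLen hGfin hGd hGc
      _ = (∑ u ∈ hGfin.toFinset, runLen u) + hGfin.toFinset.card := by
          rw [Finset.sum_add_distrib]; simp
      _ ≤ (∑ u ∈ hHfin.toFinset, runLen u) + hHfin.toFinset.card := by
          omega
      _ = ∑ u ∈ hHfin.toFinset, (runLen u + 1) := by
          rw [Finset.sum_add_distrib]; simp
      _ ≤ (incF H).ncard := sum_runLen_le_incF_ncard hHfin
end

section
/- Let F ⊆ binom(ℕ,d) be a finite compressed family. Then |Inc(F)| = Inc^[d](|F|). Equivalently, if u is the m-th element of binom(ℕ,d) in the squashed order and m has d-binomial representation C(a_d,d)+⋯+C(a_s,s), then the initial segment C(u+1) has cardinality C(a_d+1,d)+⋯+C(a_s+1,s). -/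
open Finset
open scoped symmDiff

def segF (v : Finset ℕ) : Finset (Finset ℕ) :=
  ((Finset.range (v.sup id + 1)).powersetCard v.card).filter
    (fun w => toColex w ≤ toColex v)

lemma mem_segF {v w : Finset ℕ} :
    w ∈ segF v ↔ w.card = v.card ∧ toColex w ≤ toColex v := by
  simp only [segF, mem_filter, mem_powersetCard]
  constructor
  · rintro ⟨⟨-, h⟩, hle⟩; exact ⟨h, hle⟩
  · rintro ⟨hcard, hle⟩
    refine ⟨⟨fun b hb => ?_, hcard⟩, hle⟩
    rw [Finset.mem_range, Nat.lt_succ_iff]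
    exact Finset.Colex.forall_le_mono hle (fun b hb => Finset.le_sup (f := id) hb) b hb

lemma card_segF (v : Finset ℕ) :
    (segF v).card = 1 + ∑ x ∈ v, Nat.choose x ((v.filter (· < x)).card + 1) := by
  induction v using Finset.strongInduction with
  | _ v ih =>
  rcases v.eq_empty_or_nonempty with rfl | hne
  · have : segF (∅ : Finset ℕ) = {∅} := by
      ext w
      simp only [mem_segF, Finset.card_empty, Finset.card_eq_zero, Finset.mem_singleton]
      constructor
      · rintro ⟨rfl, -⟩; rfl
      · rintro rfl; exact ⟨rfl, le_refl _⟩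
    simp [this]
  · set M := v.max' hne with hM
    have hMv : M ∈ v := v.max'_mem hne
    set v' := v.erase M with hv'
    have hv'ss : v' ⊂ v := Finset.erase_ssubset hMv
    have hv'lt : ∀ b ∈ v', b < M := fun b hb =>
      lt_of_le_of_ne (v.le_max' b (Finset.mem_of_mem_erase hb)) (Finset.ne_of_mem_erase hb)
    have hcard' : v'.card = v.card - 1 := Finset.card_erase_of_mem hMv
    have hd : 1 ≤ v.card := Finset.card_pos.2 hne
    -- decomposition
    have hdecomp : segF v = ((Finset.range M).powersetCard v.card) ∪ (segF v').image (insert M ·) := by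
      ext w
      simp only [Finset.mem_union, Finset.mem_powersetCard, mem_segF, Finset.mem_image]
      constructor
      · rintro ⟨hcard, hle⟩
        by_cases hMw : M ∈ w
        · right
          refine ⟨w.erase M, ⟨?_, ?_⟩, Finset.insert_erase hMw⟩
          · rw [Finset.card_erase_of_mem hMw, hcard, hcard']
          · have := (Finset.Colex.toColex_sdiff_le_toColex_sdiff
              (u := {M}) (by simpa using hMw) (by simpa using hMv)).2 hle
            simpa [Finset.sdiff_singleton_eq_erase] using this
        · left
          refine ⟨fun b hb => ?_, hcard⟩
          rw [Finset.mem_range]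
          exact lt_of_le_of_ne (Finset.Colex.forall_le_mono hle (fun b hb => v.le_max' b hb) b hb)
            (fun h => hMw (h ▸ hb))
      · rintro (⟨hsub, hcard⟩ | ⟨w', hw'seg, rfl⟩)
        · refine ⟨hcard, ?_⟩
          rw [← Finset.geomSum_le_geomSum_iff_toColex_le_toColex (le_refl 2)]
          exact le_of_lt (calc ∑ k ∈ w, 2 ^ k < 2 ^ M := Nat.geomSum_lt (le_refl 2) (by simpa [Finset.mem_range, Finset.subset_iff] using hsub)
            _ ≤ ∑ k ∈ v, 2 ^ k := Finset.single_le_sum (fun i _ => Nat.zero_le _) hMv)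
        · obtain ⟨hwc, hle'⟩ := hw'seg
          have hMw' : M ∉ w' := fun h => lt_irrefl M (Finset.Colex.forall_lt_mono hle' hv'lt M h)
          constructor
          · rw [Finset.card_insert_of_notMem hMw', hwc, hcard']
            omega
          · have h1 : insert M w' \ {M} = w' := by
              rw [Finset.sdiff_singleton_eq_erase, Finset.erase_insert hMw']
            have h2 : v \ {M} = v' := by rw [Finset.sdiff_singleton_eq_erase]
            refine (Finset.Colex.toColex_sdiff_le_toColex_sdiff (u := {M})
              (by simp) (by simpa using hMv)).1 ?_
            rw [h1, h2]; exact hle'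
    have hdisj : Disjoint ((Finset.range M).powersetCard v.card) ((segF v').image (insert M ·)) := by
      rw [Finset.disjoint_left]
      rintro w hw hw2
      obtain ⟨w', hw', rfl⟩ := Finset.mem_image.1 hw2
      rw [Finset.mem_powersetCard] at hw
      have := hw.1 (Finset.mem_insert_self M w')
      simp [Finset.mem_range] at this
    have hinj : Set.InjOn (insert M ·) (segF v' : Set (Finset ℕ)) := by
      intro x hx y hy hxy
      simp only [Finset.mem_coe, mem_segF] at hx hy
      have hMx : M ∉ x := fun h => lt_irrefl M (Finset.Colex.forall_lt_mono hx.2 hv'lt M h)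
      have hMy : M ∉ y := fun h => lt_irrefl M (Finset.Colex.forall_lt_mono hy.2 hv'lt M h)
      have := congrArg (Finset.erase · M) hxy
      simpa [Finset.erase_insert hMx, Finset.erase_insert hMy] using this
    rw [hdecomp, Finset.card_union_of_disjoint hdisj, Finset.card_powersetCard,
      Finset.card_range, Finset.card_image_of_injOn hinj, ih v' hv'ss]
    -- now sum manipulation
    have hsum : ∑ x ∈ v, Nat.choose x ((v.filter (· < x)).card + 1)
        = Nat.choose M ((v.filter (· < M)).card + 1)
          + ∑ x ∈ v', Nat.choose x ((v'.filter (· < x)).card + 1) := by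
      rw [← Finset.add_sum_erase _ _ hMv, ← hv']
      congr 1
      refine Finset.sum_congr rfl fun x hx => ?_
      have : v.filter (· < x) = v'.filter (· < x) := by
        ext y
        simp only [Finset.mem_filter, hv', Finset.mem_erase]
        constructor
        · rintro ⟨hy, hyx⟩
          exact ⟨⟨fun h => absurd (h ▸ hyx) (not_lt.2 (le_of_lt (hv'lt x hx))), hy⟩, hyx⟩
        · rintro ⟨⟨-, hy⟩, hyx⟩; exact ⟨hy, hyx⟩
      rw [this]
    have hfM : (v.filter (· < M)).card + 1 = v.card := by
      have : v.filter (· < M) = v' := by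
        ext y
        simp only [Finset.mem_filter, hv', Finset.mem_erase]
        exact ⟨fun ⟨hy, hyM⟩ => ⟨ne_of_lt hyM, hy⟩, fun ⟨hy, hym⟩ => ⟨hym, lt_of_le_of_ne (v.le_max' y hym) hy⟩⟩
      rw [this, hcard']
      omega
    rw [hsum, hfM]
    ring

lemma card_segF_image (d : ℕ) (e : ℕ → ℕ)
    (he : ∀ i j, i ∈ Finset.Icc 1 d → j ∈ Finset.Icc 1 d → i < j → e i < e j) :
    (segF ((Finset.Icc 1 d).image e)).card = 1 + ∑ i ∈ Finset.Icc 1 d, Nat.choose (e i) i := by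
  have hinj : Set.InjOn e (Finset.Icc 1 d : Set ℕ) := by
    intro i hi j hj hij
    by_contra hne
    rcases lt_or_gt_of_ne hne with h | h
    · exact absurd hij (ne_of_lt (he i j hi hj h))
    · exact absurd hij.symm (ne_of_lt (he j i hj hi h))
  rw [card_segF, Finset.sum_image (fun i hi j hj => hinj hi hj)]
  congr 1
  refine Finset.sum_congr rfl fun i hi => ?_
  have hi1 : 1 ≤ i := (Finset.mem_Icc.1 hi).1
  have hid : i ≤ d := (Finset.mem_Icc.1 hi).2
  have h1 : ((Finset.Icc 1 d).image e).filter (· < e i)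
      = ((Finset.Icc 1 d).filter (fun j => e j < e i)).image e := by
    rw [Finset.filter_image]
  have h2 : (Finset.Icc 1 d).filter (fun j => e j < e i) = Finset.Icc 1 (i - 1) := by
    ext j
    simp only [Finset.mem_filter, Finset.mem_Icc]
    constructor
    · rintro ⟨⟨hj1, hjd⟩, hje⟩
      refine ⟨hj1, ?_⟩
      by_contra h
      have hij : i ≤ j := by omega
      rcases eq_or_lt_of_le hij with rfl | h'
      · exact lt_irrefl _ hje
      · exact absurd hje (not_lt.2 (le_of_lt (he i j hi (Finset.mem_Icc.2 ⟨hj1, hjd⟩) h')))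
    · rintro ⟨hj1, hji⟩
      have hjd : j ∈ Finset.Icc 1 d := Finset.mem_Icc.2 ⟨hj1, by omega⟩
      exact ⟨Finset.mem_Icc.1 hjd, he j i hjd hi (by omega)⟩
  rw [h1, h2, Finset.card_image_of_injOn (hinj.mono (by
    intro j hj
    simp only [Finset.coe_Icc, Set.mem_Icc] at hj ⊢
    omega)), Nat.card_Icc]
  congr 1
  omega

lemma sum_Icc_shift (f : ℕ → ℕ) (a s : ℕ) :
    ∑ i ∈ Finset.Icc a (a + s), f i = ∑ i ∈ Finset.range (s + 1), f (a + i) := by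
  induction s with
  | zero => simp
  | succ s ih =>
      rw [← Nat.add_assoc, Finset.sum_Icc_succ_top (by omega), ih,
        Finset.sum_range_succ (fun i => f (a + i)) (s + 1), ← Nat.add_assoc a s 1]

lemma hockeyAux (s n : ℕ) (h : s ≤ n) :
    1 + ∑ i ∈ Finset.Icc 1 s, Nat.choose (n - s + i - 1) i = Nat.choose n s := by
  rcases Nat.eq_zero_or_pos s with rfl | hs1
  · simp
  rcases Nat.eq_or_lt_of_le h with rfl | hlt
  · have hz : ∀ i ∈ Finset.Icc 1 s, Nat.choose (s - s + i - 1) i = 0 := fun i hi =>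
      Nat.choose_eq_zero_of_lt (by have := (Finset.mem_Icc.1 hi).1; omega)
    rw [Finset.sum_eq_zero hz, Nat.choose_self]
    omega
  · have ht1 : 1 ≤ n - s := by omega
    set t := n - s with ht
    have key : ∑ m ∈ Finset.Icc (t-1) (t-1+s), Nat.choose m (t-1) = Nat.choose (t+s) t := by
      rw [Nat.sum_Icc_choose]
      congr 1 <;> omega
    rw [sum_Icc_shift, Finset.sum_range_succ'] at key
    have h0 : Nat.choose (t - 1 + 0) (t - 1) = 1 := by simp
    rw [h0] at key
    have hsum : ∑ i ∈ Finset.Icc 1 s, Nat.choose (t + i - 1) i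
        = ∑ i ∈ Finset.range s, Nat.choose (t - 1 + (i + 1)) (t - 1) := by
      have hIcc : Finset.Icc 1 s = Finset.Icc 1 (1 + (s-1)) := by congr 1; omega
      rw [hIcc, sum_Icc_shift]
      have hss : s - 1 + 1 = s := by omega
      rw [hss]
      refine Finset.sum_congr rfl fun i hi => ?_
      have h1 : t + (1 + i) - 1 = t - 1 + (i + 1) := by omega
      have h3 := Nat.choose_symm (show 1+i ≤ t-1+(i+1) by omega)
      rw [show t-1+(i+1) - (1+i) = t-1 from by omega] at h3
      rw [h1, ← h3]
    have hfin : Nat.choose (t+s) t = Nat.choose n s := by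
      rw [ht, Nat.sub_add_cancel h]
      exact Nat.choose_symm h
    rw [hsum, Nat.add_comm 1 (∑ i ∈ Finset.range s, _), key]
    exact hfin

lemma pullback {u v : Finset ℕ} (hcard : v.card = u.card)
    (h : toColex v ≤ toColex (u.image (· + 1))) :
    ∃ w : Finset ℕ, w.card = u.card ∧ toColex w ≤ toColex u ∧
      ∃ i, w.image (piShift i) = v := by
  have hex : ∃ n, n ∉ v := ⟨v.sup id + 1, fun hmem =>
    absurd (Finset.le_sup (f := id) hmem) (by simp only [id_eq]; omega)⟩
  classical
  set i := Nat.find hex with hidef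
  have hiv : i ∉ v := Nat.find_spec hex
  have hmin : ∀ j < i, j ∈ v := fun j hj => by
    by_contra hjv
    exact absurd hj (not_lt.2 (Nat.find_le hjv))
  set w : Finset ℕ := Finset.range i ∪ (v.filter (i < ·)).image (· - 1) with hwdef
  have hvsplit : v = Finset.range i ∪ v.filter (i < ·) := by
    ext x
    simp only [Finset.mem_union, Finset.mem_range, Finset.mem_filter]
    constructor
    · intro hx
      rcases lt_trichotomy x i with h' | rfl | h'
      · exact Or.inl h'
      · exact absurd hx hiv
      · exact Or.inr ⟨hx, h'⟩
    · rintro (h' | ⟨hx, -⟩)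
      · exact hmin x h'
      · exact hx
  have hinjOn : Set.InjOn (· - 1) ↑(v.filter (i < ·)) := by
    intro x hx y hy hxy
    simp only [Finset.coe_filter, Set.mem_setOf_eq] at hx hy
    have hxy' : x - 1 = y - 1 := hxy
    omega
  have hdisj1 : Disjoint (Finset.range i) ((v.filter (i < ·)).image (· - 1)) := by
    rw [Finset.disjoint_left]
    intro x hx hx2
    obtain ⟨y, hy, rfl⟩ := Finset.mem_image.1 hx2
    rw [Finset.mem_filter] at hy
    have hx' : y - 1 < i := Finset.mem_range.1 hx
    omega
  have hdisj2 : Disjoint (Finset.range i) (v.filter (i < ·)) := by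
    rw [Finset.disjoint_left]
    intro x hx hx2
    rw [Finset.mem_filter] at hx2
    rw [Finset.mem_range] at hx
    omega
  have hcardv : v.card = i + (v.filter (i < ·)).card := by
    conv_lhs => rw [hvsplit]
    rw [Finset.card_union_of_disjoint hdisj2, Finset.card_range]
  have hcardw : w.card = u.card := by
    rw [hwdef, Finset.card_union_of_disjoint hdisj1, Finset.card_range,
      Finset.card_image_of_injOn hinjOn, ← hcardv, hcard]
  have himg : w.image (piShift i) = v := by
    rw [hwdef, Finset.image_union, Finset.image_image]
    have h1 : (Finset.range i).image (piShift i) = Finset.range i := by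
      apply Finset.image_congr (g := id) ?_ |>.trans (Finset.image_id)
      intro x hx
      rw [Finset.mem_coe, Finset.mem_range] at hx
      simp [piShift, hx]
    have h2 : (v.filter (i < ·)).image (piShift i ∘ (· - 1)) = v.filter (i < ·) := by
      apply Finset.image_congr (g := id) ?_ |>.trans (Finset.image_id)
      intro x hx
      rw [Finset.mem_coe, Finset.mem_filter] at hx
      simp only [Function.comp_apply, piShift, id_eq]
      have : ¬ (x - 1 < i) := by omega
      rw [if_neg this]
      omega
    rw [h1, h2, ← hvsplit]
  refine ⟨w, hcardw, ?_, i, himg⟩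
  by_contra hle
  rw [not_le] at hle
  obtain ⟨hne, hz⟩ := Finset.Colex.toColex_lt_toColex_iff_max'_mem.1 hle
  set z := (u ∆ w).max' (Finset.symmDiff_nonempty.2 hne) with hzdef
  have hzsymm : z ∈ u ∆ w := Finset.max'_mem _ _
  have hzw : z ∈ w := hz
  have hzu : z ∉ u := by
    rw [Finset.mem_symmDiff] at hzsymm
    rcases hzsymm with ⟨-, h'⟩ | ⟨-, h'⟩
    · exact absurd hzw h'
    · exact h'
  have hagree : ∀ y, z < y → (y ∈ u ↔ y ∈ w) := by
    intro y hy
    by_contra hiff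
    have hymem : y ∈ u ∆ w := by
      rw [Finset.mem_symmDiff]
      by_cases h1 : y ∈ u
      · exact Or.inl ⟨h1, fun h2 => hiff ⟨fun _ => h2, fun _ => h1⟩⟩
      · rcases Classical.em (y ∈ w) with h2 | h2
        · exact Or.inr ⟨h2, h1⟩
        · exact absurd ⟨fun h => absurd h h1, fun h => absurd h h2⟩ hiff
    exact absurd (Finset.le_max' _ y hymem) (not_le.2 hy)
  rcases lt_or_ge z i with hzi | hzi
  · -- z < i : cardinality contradiction
    have hfeq : u.filter (z < ·) = w.filter (z < ·) := by
      ext y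
      simp only [Finset.mem_filter]
      constructor
      · rintro ⟨hy, hzy⟩; exact ⟨(hagree y hzy).1 hy, hzy⟩
      · rintro ⟨hy, hzy⟩; exact ⟨(hagree y hzy).2 hy, hzy⟩
    have hneg : ∀ t : Finset ℕ, t.filter (fun a => ¬ a ≤ z) = t.filter (z < ·) :=
      fun t => Finset.filter_congr (fun x _ => by simp [not_le])
    have hu2 := Finset.card_filter_add_card_filter_not (s := u) (p := (· ≤ z))
    rw [hneg] at hu2
    have hw2 := Finset.card_filter_add_card_filter_not (s := w) (p := (· ≤ z))
    rw [hneg] at hw2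
    have hub : (u.filter (· ≤ z)).card ≤ z := by
      have : u.filter (· ≤ z) ⊆ (Finset.range (z+1)).erase z := by
        intro x hx
        rw [Finset.mem_filter] at hx
        rw [Finset.mem_erase, Finset.mem_range]
        exact ⟨fun h => hzu (h ▸ hx.1), by omega⟩
      have := Finset.card_le_card this
      rwa [Finset.card_erase_of_mem (by simp), Finset.card_range, Nat.add_sub_cancel] at this
    have hwb : z + 1 ≤ (w.filter (· ≤ z)).card := by
      have : Finset.range (z+1) ⊆ w.filter (· ≤ z) := by
        intro x hx
        rw [Finset.mem_range] at hx
        rw [Finset.mem_filter]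
        refine ⟨?_, by omega⟩
        rw [hwdef]
        exact Finset.mem_union_left _ (Finset.mem_range.2 (by omega))
      have := Finset.card_le_card this
      rwa [Finset.card_range] at this
    rw [hfeq] at hu2
    omega
  · -- i ≤ z : contradiction with h
    have hzw' : z ∈ (v.filter (i < ·)).image (· - 1) := by
      rcases Finset.mem_union.1 hzw with h' | h'
      · rw [Finset.mem_range] at h'; omega
      · exact h'
    obtain ⟨x, hx, hxz⟩ := Finset.mem_image.1 hzw'
    rw [Finset.mem_filter] at hx
    have hxz1 : x = z + 1 := by omega
    have : toColex (u.image (· + 1)) < toColex v := by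
      rw [Finset.Colex.toColex_lt_toColex_iff_exists_forall_lt]
      refine ⟨z + 1, hxz1 ▸ hx.1, ?_, ?_⟩
      · intro hmem
        obtain ⟨y, hy, hy2⟩ := Finset.mem_image.1 hmem
        have : y = z := by omega
        exact hzu (this ▸ hy)
      · intro b hb hbv
        obtain ⟨y, hy, rfl⟩ := Finset.mem_image.1 hb
        by_contra hcon
        rw [not_lt] at hcon
        have hyz : z < y := by
          rcases Nat.eq_or_lt_of_le (show z ≤ y by omega) with rfl | h'
          · exact absurd hy hzu
          · exact h'
        have hyw : y ∈ w := (hagree y hyz).1 hy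
        rcases Finset.mem_union.1 hyw with h' | h'
        · rw [Finset.mem_range] at h'; omega
        · obtain ⟨x', hx', hx'y⟩ := Finset.mem_image.1 h'
          rw [Finset.mem_filter] at hx'
          have : x' = y + 1 := by omega
          exact hbv (this ▸ hx'.1)
    exact absurd h (not_le.2 this)

lemma incF_segF (u₀ : Finset ℕ) :
    incF (↑(segF u₀)) = ↑(segF (u₀.image (· + 1))) := by
  have hsucc : Function.Injective (· + 1 : ℕ → ℕ) := fun x y h => Nat.succ_injective h
  ext v
  simp only [incF, Set.mem_setOf_eq, Finset.mem_coe, mem_segF]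
  constructor
  · rintro ⟨w, hw, π, hπ, rfl⟩
    have hπinj : Function.Injective π := hπ.1.injective
    constructor
    · rw [Finset.card_image_of_injective _ hπinj, Finset.card_image_of_injective _ hsucc, hw.1]
    · calc toColex (w.image π)
          ≤ toColex (w.image (· + 1)) := by
            rw [← Finset.geomSum_le_geomSum_iff_toColex_le_toColex (le_refl 2),
              Finset.sum_image (fun a _ b _ h => hπinj h),
              Finset.sum_image (fun a _ b _ h => hsucc h)]
            exact Finset.sum_le_sum fun j _ => Nat.pow_le_pow_right (by norm_num) (hπ.2 j)
        _ ≤ toColex (u₀.image (· + 1)) :=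
            (Finset.Colex.toColex_image_le_toColex_image (fun x y h => Nat.add_lt_add_right h 1 : StrictMono (· + 1))).2 hw.2
  · rintro ⟨hcard, hle⟩
    have hc : v.card = u₀.card := by
      rw [hcard, Finset.card_image_of_injective _ hsucc]
    obtain ⟨w, hwcard, hwle, i, rfl⟩ := pullback hc hle
    exact ⟨w, ⟨hwcard, hwle⟩, piShift i, piShift_mem_Inc1 i, rfl⟩

lemma assembleSum (d s : ℕ) (hs1 : 1 ≤ s) (hsd : s ≤ d) (b : ℕ → ℕ) (n : ℕ) (hn : s ≤ n)
    (hbs : b s = n) (f : ℕ → ℕ) (hf1 : ∀ i, 1 ≤ i → i ≤ s → f i = n - s + i - 1)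
    (hf2 : ∀ i, s < i → i ≤ d → f i = b i) :
    1 + ∑ i ∈ Finset.Icc 1 d, Nat.choose (f i) i
      = ∑ i ∈ Finset.Icc s d, Nat.choose (b i) i := by
  have e1 : Finset.Icc 1 d = Finset.Ioc 0 d := by
    ext x; simp only [Finset.mem_Icc, Finset.mem_Ioc]; omega
  have e2 : Finset.Icc 1 s = Finset.Ioc 0 s := by
    ext x; simp only [Finset.mem_Icc, Finset.mem_Ioc]; omega
  have e3 : Finset.Icc (s+1) d = Finset.Ioc s d := by
    ext x; simp only [Finset.mem_Icc, Finset.mem_Ioc]; omega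
  have hsplit : ∑ i ∈ Finset.Icc 1 d, Nat.choose (f i) i
      = ∑ i ∈ Finset.Icc 1 s, Nat.choose (n - s + i - 1) i
        + ∑ i ∈ Finset.Icc (s+1) d, Nat.choose (b i) i := by
    rw [e1, e2, e3, ← Finset.sum_Ioc_consecutive (fun i => Nat.choose (f i) i) (Nat.zero_le s) hsd]
    congr 1
    · refine Finset.sum_congr rfl fun i hi => ?_
      rw [Finset.mem_Ioc] at hi
      rw [hf1 i (by omega) hi.2]
    · refine Finset.sum_congr rfl fun i hi => ?_
      rw [Finset.mem_Ioc] at hi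
      rw [hf2 i hi.1 hi.2]
  rw [hsplit, ← Nat.add_assoc, hockeyAux s n hn, ← hbs, e3]
  exact Finset.add_sum_Ioc_eq_sum_Icc (f := fun i => Nat.choose (b i) i) hsd

theorem stmt14 (d : ℕ) (hd : 1 ≤ d) (F : Set (Finset ℕ)) (hFfin : F.Finite)
    (hFd : ∀ u ∈ F, u.card = d) (hcomp : IsCompressedIn Set.univ d F)
    (s : ℕ) (a : ℕ → ℕ) (hrep : IsBinRep d F.ncard s a) :
    (incF F).ncard = ∑ i ∈ Finset.Icc s d, Nat.choose (a i + 1) i := by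
  obtain ⟨hs1, hsd, hmono, has, hm⟩ := hrep
  have hchain : ∀ i j, s ≤ i → i < j → j ≤ d → a i < a j := by
    intro i j hi hij hjd
    have key : ∀ k, i < k → k ≤ d → a i < a k := by
      intro k
      induction k with
      | zero => omega
      | succ k ih =>
          intro h1 h2
          rcases Nat.lt_or_ge i k with h' | h'
          · exact lt_trans (ih h' (by omega)) (hmono k (by omega) (by omega))
          · have hik : i = k := by omega
            subst hik
            exact hmono i hi (by omega)
    exact key j hij hjd
  set e : ℕ → ℕ := fun i => if i ≤ s then a s - s + i - 1 else a i with hedef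
  have hemono : ∀ i j, i ∈ Finset.Icc 1 d → j ∈ Finset.Icc 1 d → i < j → e i < e j := by
    intro i j hi hj hij
    rw [Finset.mem_Icc] at hi hj
    simp only [hedef]
    by_cases h1 : i ≤ s <;> by_cases h2 : j ≤ s
    · rw [if_pos h1, if_pos h2]; omega
    · rw [if_pos h1, if_neg h2]
      have : a s < a j := hchain s j (le_refl s) (by omega) hj.2
      omega
    · exfalso; omega
    · rw [if_neg h1, if_neg h2]; exact hchain i j (by omega) hij hj.2
  have hemono' : ∀ i j, i ∈ Finset.Icc 1 d → j ∈ Finset.Icc 1 d → i < j → e i + 1 < e j + 1 :=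
    fun i j hi hj hij => by have := hemono i j hi hj hij; omega
  have hinj : Set.InjOn e ↑(Finset.Icc 1 d) := by
    intro i hi j hj hij
    rw [Finset.mem_coe] at hi hj
    by_contra hne
    rcases lt_or_gt_of_ne hne with h' | h'
    · exact absurd hij (ne_of_lt (hemono i j hi hj h'))
    · exact absurd hij.symm (ne_of_lt (hemono j i hj hi h'))
  set U := (Finset.Icc 1 d).image e with hUdef
  have hUcard : U.card = d := by
    rw [hUdef, Finset.card_image_of_injOn hinj, Nat.card_Icc]
    omega
  have hcount1 : (segF U).card = ∑ i ∈ Finset.Icc s d, Nat.choose (a i) i := by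
    rw [hUdef, card_segF_image d e hemono]
    exact assembleSum d s hs1 hsd a (a s) has rfl e
      (fun i h1 h2 => by simp only [hedef]; rw [if_pos h2])
      (fun i h1 h2 => by simp only [hedef]; rw [if_neg (by omega)])
  have hcount2 : (segF (U.image (· + 1))).card = ∑ i ∈ Finset.Icc s d, Nat.choose (a i + 1) i := by
    have himg : U.image (· + 1) = (Finset.Icc 1 d).image (fun i => e i + 1) := by
      rw [hUdef, Finset.image_image]
      rfl
    rw [himg, card_segF_image d (fun i => e i + 1) hemono']
    exact assembleSum d s hs1 hsd (fun i => a i + 1) (a s + 1) (by omega) rfl (fun i => e i + 1)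
      (fun i h1 h2 => by simp only [hedef]; rw [if_pos h2]; omega)
      (fun i h1 h2 => by simp only [hedef]; rw [if_neg (by omega)])
  -- F is nonempty
  have hmpos : 0 < F.ncard := by
    rw [hm]
    calc 0 < Nat.choose (a s) s := Nat.choose_pos has
      _ ≤ ∑ i ∈ Finset.Icc s d, Nat.choose (a i) i :=
          Finset.single_le_sum (f := fun i => Nat.choose (a i) i) (fun i _ => Nat.zero_le _)
            (Finset.mem_Icc.2 ⟨le_refl s, hsd⟩)
  have hFne : F.Nonempty := Set.nonempty_of_ncard_ne_zero (by omega)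
  -- maximum of F
  have hFne' : hFfin.toFinset.Nonempty := by
    rwa [Set.Finite.toFinset_nonempty]
  obtain ⟨u₀, hu₀mem, hu₀max⟩ := Finset.exists_max_image hFfin.toFinset toColex hFne'
  rw [Set.Finite.mem_toFinset] at hu₀mem
  have hu₀card : u₀.card = d := hFd u₀ hu₀mem
  have hFeq : F = ↑(segF u₀) := by
    ext w
    rw [Finset.mem_coe, mem_segF]
    constructor
    · intro hw
      refine ⟨(hFd w hw).trans hu₀card.symm, ?_⟩
      exact hu₀max w (Set.Finite.mem_toFinset _ |>.2 hw)
    · rintro ⟨hwcard, hwle⟩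
      exact hcomp.2 u₀ hu₀mem w (by simp) (hwcard.trans hu₀card) hwle
  have hFm : (segF u₀).card = F.ncard := by
    rw [hFeq, Set.ncard_coe_finset]
  -- identify u₀ with U
  have hsub : ∀ x y : Finset ℕ, x.card = y.card →
      toColex x ≤ toColex y → segF x ⊆ segF y := by
    intro x y hc hxy w hw
    rw [mem_segF] at hw ⊢
    exact ⟨hw.1.trans hc, le_trans hw.2 hxy⟩
  have hcards : (segF u₀).card = (segF U).card := by
    rw [hFm, hcount1, hm]
  have hUu₀ : u₀ = U := by
    have hcc : u₀.card = U.card := by rw [hu₀card, hUcard]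
    rcases le_total (toColex u₀) (toColex U) with hle | hle
    · have h1 := hsub u₀ U hcc hle
      have heq : segF u₀ = segF U :=
        Finset.eq_of_subset_of_card_le h1 (le_of_eq hcards.symm)
      have : U ∈ segF u₀ := heq ▸ (mem_segF.2 ⟨rfl, le_refl _⟩)
      have hle2 := (mem_segF.1 this).2
      exact toColex_inj.1 (le_antisymm hle hle2)
    · have h1 := hsub U u₀ hcc.symm hle
      have heq : segF U = segF u₀ :=
        Finset.eq_of_subset_of_card_le h1 (le_of_eq hcards)
      have : u₀ ∈ segF U := heq ▸ (mem_segF.2 ⟨rfl, le_refl _⟩)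
      have hle2 := (mem_segF.1 this).2
      exact toColex_inj.1 (le_antisymm hle2 hle)
  rw [hFeq, hUu₀, incF_segF, Set.ncard_coe_finset, hcount2]
end

section
/- If Δ is a simplicial complex (a collection of finite subsets of ℕ closed under taking subsets, with finitely many faces), then Inc(Δ) is also a simplicial complex. -/
theorem stmt15 (Δ : Set (Finset ℕ)) (h : IsSimplicialComplex Δ) :
    IsSimplicialComplex (incF Δ) := by
  obtain ⟨hfin, hclosed⟩ := h
  constructor
  · -- finiteness
    have hA : (⋃ u ∈ Δ, ((u : Set ℕ) ∪ ((· + 1) '' (u : Set ℕ)))).Finite :=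
      hfin.biUnion (fun u _ => (u.finite_toSet.union (u.finite_toSet.image _)))
    apply Set.Finite.subset (hA.toFinset.powerset.finite_toSet)
    rintro v ⟨u, hu, π, ⟨hmono, hle⟩, rfl⟩
    simp only [Finset.coe_powerset, Set.mem_preimage, Set.mem_powerset_iff,
      Finset.coe_image]
    intro x hx
    obtain ⟨y, hy, rfl⟩ := hx
    simp only [Set.Finite.coe_toFinset, Set.mem_iUnion]
    refine ⟨u, hu, ?_⟩
    have h1 : y ≤ π y := hmono.le_apply
    have h2 : π y ≤ y + 1 := hle y
    rcases le_or_gt (π y) y with hc | hc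
    · have : π y = y := le_antisymm hc h1
      rw [this]; exact Or.inl hy
    · have : π y = y + 1 := le_antisymm h2 hc
      exact Or.inr ⟨y, hy, this.symm⟩
  · rintro F ⟨u, hu, π, hπ, rfl⟩ G hG
    refine ⟨u.filter (fun a => π a ∈ G), hclosed u hu _ (Finset.filter_subset _ _),
      π, hπ, ?_⟩
    ext x
    simp only [Finset.mem_image, Finset.mem_filter]
    constructor
    · intro hx
      obtain ⟨a, ha, rfl⟩ := Finset.mem_image.mp (hG hx)
      exact ⟨a, ⟨ha, hx⟩, rfl⟩
    · rintro ⟨a, ⟨_, hg⟩, rfl⟩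
      exact hg
end
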